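/- τ_∞ = 1 - (1/2)·Ξ(1/2), where τ_∞ = ∑_{k≥1} t_k·2^{-k} with t_k the Thue-Morse sequence and Ξ(z) = ∏_{n=0}^∞ (1 - z^{2^n}). -/

import Mathlib

open Finset Filter Topology

private lemma digitsum_step (n : ℕ) (hn : n ≠ 0) :
    (Nat.digits 2 n).sum = n % 2 + (Nat.digits 2 (n / 2)).sum := by
  rw [Nat.digits_def' (by norm_num : 1 < 2) (Nat.pos_of_ne_zero hn)]
  simp

private lemma digitsum_add_pow (N : ℕ) : ∀ k < 2 ^ N,
    (Nat.digits 2 (k + 2 ^ N)).sum = (Nat.digits 2 k).sum + 1 := by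
  induction N with
  | zero =>
    intro k hk
    interval_cases k
    simp
  | succ N ih =>
    intro k hk
    have h1 : k + 2 ^ (N + 1) ≠ 0 := by positivity
    rw [digitsum_step _ h1]
    have h2 : (k + 2 ^ (N + 1)) % 2 = k % 2 := by
      omega
    have h3 : (k + 2 ^ (N + 1)) / 2 = k / 2 + 2 ^ N := by
      omega
    rw [h2, h3, ih (k / 2) (by omega)]
    rcases Nat.eq_zero_or_pos k with hk0 | hk0
    · subst hk0; simp
    · rw [digitsum_step k (by omega)]
      ring

private lemma eps_flip (t : ℕ → ℕ) (ht : ∀ k, t k = (Nat.digits 2 k).sum % 2)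
    (N : ℕ) (k : ℕ) (hk : k < 2 ^ N) :
    (1 - 2 * (t (k + 2 ^ N) : ℝ)) = -(1 - 2 * (t k : ℝ)) := by
  have h := digitsum_add_pow N k hk
  have h1 : t (k + 2 ^ N) = ((Nat.digits 2 k).sum + 1) % 2 := by rw [ht, h]
  have h2 : t k = (Nat.digits 2 k).sum % 2 := ht k
  rcases Nat.mod_two_eq_zero_or_one (Nat.digits 2 k).sum with h0 | h0
  · have e1 : t k = 0 := by rw [h2, h0]
    have e2 : t (k + 2 ^ N) = 1 := by rw [h1]; omega
    rw [e1, e2]; norm_num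
  · have e1 : t k = 1 := by rw [h2, h0]
    have e2 : t (k + 2 ^ N) = 0 := by rw [h1]; omega
    rw [e1, e2]; norm_num

private lemma prod_eq_sum (t : ℕ → ℕ) (ht : ∀ k, t k = (Nat.digits 2 k).sum % 2)
    (x : ℝ) (N : ℕ) :
    ∏ n ∈ Finset.range N, (1 - x ^ 2 ^ n) =
      ∑ k ∈ Finset.range (2 ^ N), (1 - 2 * (t k : ℝ)) * x ^ k := by
  induction N with
  | zero =>
    have ht0 : t 0 = 0 := by rw [ht]; simp
    simp [ht0]
  | succ N ih =>
    rw [Finset.prod_range_succ, ih]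
    have hsplit : (2 : ℕ) ^ (N + 1) = 2 ^ N + 2 ^ N := by ring
    rw [hsplit, Finset.sum_range_add]
    have : ∀ k ∈ Finset.range (2 ^ N),
        (1 - 2 * (t (2 ^ N + k) : ℝ)) * x ^ (2 ^ N + k) =
          -((1 - 2 * (t k : ℝ)) * x ^ k) * x ^ 2 ^ N := by
      intro k hk
      rw [Finset.mem_range] at hk
      have := eps_flip t ht N k hk
      rw [Nat.add_comm (2 ^ N) k, this, pow_add]
      ring
    rw [Finset.sum_congr rfl this]
    simp only [neg_mul]
    rw [Finset.sum_neg_distrib, ← Finset.sum_mul]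
    ring

theorem stmt_13 (t : ℕ → ℕ) (ht : ∀ k, t k = (Nat.digits 2 k).sum % 2) :
    ∑' k : ℕ, (t (k + 1) : ℝ) / 2 ^ (k + 1) =
      1 - (1 / 2) * ∏' n : ℕ, (1 - ((1 : ℝ) / 2) ^ 2 ^ n) := by
  have ht01 : ∀ k, t k = 0 ∨ t k = 1 := fun k => by rw [ht]; omega
  have ht0 : t 0 = 0 := by rw [ht]; simp
  set x : ℝ := 1 / 2 with hx
  have hx0 : (0 : ℝ) < x := by norm_num [hx]
  -- summability of g k = t k * x ^ k
  have hgeo : Summable (fun k : ℕ => x ^ k) :=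
    summable_geometric_of_lt_one (by norm_num [hx]) (by norm_num [hx])
  have hg : Summable (fun k : ℕ => (t k : ℝ) * x ^ k) := by
    refine Summable.of_nonneg_of_le (fun k => by positivity) (fun k => ?_) hgeo
    rcases ht01 k with h | h <;> simp [h] <;> positivity
  -- summability of eps k * x ^ k
  have heps : Summable (fun k : ℕ => (1 - 2 * (t k : ℝ)) * x ^ k) := by
    apply Summable.of_norm
    refine Summable.of_nonneg_of_le (fun k => norm_nonneg _) (fun k => ?_) hgeo
    rw [norm_mul]
    have h1 : ‖(1 - 2 * (t k : ℝ))‖ ≤ 1 := by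
      rcases ht01 k with h | h <;> rw [h] <;> norm_num
    calc ‖(1 - 2 * (t k : ℝ))‖ * ‖x ^ k‖ ≤ 1 * ‖x ^ k‖ := by
          apply mul_le_mul_of_nonneg_right h1 (norm_nonneg _)
      _ = x ^ k := by rw [one_mul, norm_pow, Real.norm_eq_abs, abs_of_pos hx0]
  -- multipliability of the infinite product
  have hfac_pos : ∀ n : ℕ, (0 : ℝ) < 1 - x ^ 2 ^ n := by
    intro n
    have : x ^ 2 ^ n < 1 := pow_lt_one₀ (le_of_lt hx0) (by norm_num [hx]) (by positivity)
    linarith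
  have hlogsum : Summable (fun n : ℕ => Real.log (1 - x ^ 2 ^ n)) := by
    apply Summable.of_norm
    refine Summable.of_nonneg_of_le (fun n => norm_nonneg _) (fun n => ?_) (hgeo.mul_left 2)
    have hxn : x ^ 2 ^ n ≤ x ^ n := by
      apply pow_le_pow_of_le_one (le_of_lt hx0) (by norm_num [hx])
      exact Nat.le_of_lt (Nat.lt_two_pow_self)
    have hxn2 : x ^ 2 ^ n ≤ 1 / 2 := by
      calc x ^ 2 ^ n ≤ x ^ 1 := pow_le_pow_of_le_one (le_of_lt hx0) (by norm_num [hx])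
            (Nat.one_le_two_pow)
        _ = 1 / 2 := by norm_num [hx]
    rw [Real.norm_eq_abs, abs_of_nonpos (Real.log_nonpos (by linarith [hfac_pos n])
      (by nlinarith [pow_nonneg (le_of_lt hx0) (2 ^ n)]))]
    -- `-log (1 - y) ≤ 2 y` for `0 ≤ y ≤ 1/2`
    have hy0 : (0:ℝ) ≤ x ^ 2 ^ n := by positivity
    have key : -Real.log (1 - x ^ 2 ^ n) ≤ 2 * x ^ 2 ^ n := by
      rw [← Real.log_inv]
      have h1 : (1 - x ^ 2 ^ n)⁻¹ ≤ 1 + 2 * x ^ 2 ^ n := by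
        rw [inv_le_iff_one_le_mul₀ (hfac_pos n)]
        nlinarith
      calc Real.log (1 - x ^ 2 ^ n)⁻¹ ≤ Real.log (1 + 2 * x ^ 2 ^ n) :=
            Real.log_le_log (inv_pos.mpr (hfac_pos n)) h1
        _ ≤ 1 + 2 * x ^ 2 ^ n - 1 := Real.log_le_sub_one_of_pos (by positivity)
        _ = 2 * x ^ 2 ^ n := by ring
    calc -Real.log (1 - x ^ 2 ^ n) ≤ 2 * x ^ 2 ^ n := key
      _ ≤ 2 * x ^ n := by linarith
  have hmult : Multipliable (fun n : ℕ => 1 - x ^ 2 ^ n) := by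
    have := Real.multipliable_of_summable_log hfac_pos hlogsum
    exact this
  -- partial products tend to the tprod
  have hprod_tendsto : Tendsto (fun N => ∏ n ∈ Finset.range N, (1 - x ^ 2 ^ n))
      atTop (𝓝 (∏' n : ℕ, (1 - x ^ 2 ^ n))) :=
    hmult.hasProd.tendsto_prod_nat
  -- partial sums along 2^N tend to the tsum of eps
  set T : ℝ := ∑' k : ℕ, (1 - 2 * (t k : ℝ)) * x ^ k with hT
  have hsum_tendsto : Tendsto (fun N => ∑ k ∈ Finset.range (2 ^ N), (1 - 2 * (t k : ℝ)) * x ^ k)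
      atTop (𝓝 T) := by
    have h1 : Tendsto (fun M => ∑ k ∈ Finset.range M, (1 - 2 * (t k : ℝ)) * x ^ k)
        atTop (𝓝 T) := heps.hasSum.tendsto_sum_nat
    exact h1.comp (tendsto_pow_atTop_atTop_of_one_lt (α := ℕ) (r := 2) (by norm_num))
  -- so tprod = T
  have hPT : (∏' n : ℕ, (1 - x ^ 2 ^ n)) = T := by
    apply tendsto_nhds_unique hprod_tendsto
    have : (fun N => ∏ n ∈ Finset.range N, (1 - x ^ 2 ^ n)) =
        (fun N => ∑ k ∈ Finset.range (2 ^ N), (1 - 2 * (t k : ℝ)) * x ^ k) := by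
      funext N; exact prod_eq_sum t ht x N
    rw [this]
    exact hsum_tendsto
  -- T = 2 - 2 * tau where tau = ∑' t k * x ^ k
  set τ : ℝ := ∑' k : ℕ, (t k : ℝ) * x ^ k with hτ
  have hTval : T = 2 - 2 * τ := by
    have hsplit : ∀ k : ℕ, (1 - 2 * (t k : ℝ)) * x ^ k = x ^ k - 2 * ((t k : ℝ) * x ^ k) := by
      intro k; ring
    rw [hT]
    rw [tsum_congr hsplit]
    rw [Summable.tsum_sub hgeo (hg.mul_left 2)]
    rw [tsum_mul_left]
    rw [tsum_geometric_of_lt_one (by norm_num [hx]) (by norm_num [hx])]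
    norm_num [hx, hτ]
  -- the goal's sum equals τ
  have hgoal_sum : (∑' k : ℕ, (t (k + 1) : ℝ) / 2 ^ (k + 1)) = τ := by
    have h0 : ∀ k : ℕ, (t k : ℝ) * x ^ k = (t k : ℝ) / 2 ^ k := by
      intro k
      rw [hx, div_pow, one_pow]
      ring
    have h1 : τ = (t 0 : ℝ) * x ^ 0 + ∑' k : ℕ, (t (k + 1) : ℝ) * x ^ (k + 1) := by
      rw [hτ]; exact Summable.tsum_eq_zero_add hg
    have h2 : τ = ∑' k : ℕ, (t (k + 1) : ℝ) * x ^ (k + 1) := by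
      rw [h1, ht0]; simp
    rw [h2]
    exact tsum_congr fun k => (h0 (k + 1)).symm
  rw [hgoal_sum, hPT, hTval]
  ring
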